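/- arXiv:1309.4821 — 6 statements merged into one kernel-verified Lean document; each statement's English description precedes it below -/
import Mathlib

section
/- For every Monadic Equational System S = (V, C, T, E) that admits free algebras, the induced free S-algebra monad T_S on C is a strong monad, with strength uniquely determined by compatibility with the strength of T via the free-algebra structure maps. -/
open CategoryTheory MonoidalCategory Limits

universe w v₁ v₂ v₃ u₁ u₂ u₃

namespace MonEq

variable (V : Type u₁) [Category.{v₁} V] [MonoidalCategory V]
variable (C : Type u₂) [Category.{v₂} C]

/-- An action of a monoidal category `V` on a category `C`, with coherence
isomorphisms `lam : I ⊳ c ≅ c` and `assoc : (u ⊗ v) ⊳ c ≅ u ⊳ (v ⊳ c)`. -/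
structure MonAction where
  act : V ⥤ C ⥤ C
  lam : act.obj (𝟙_ V) ≅ 𝟭 C
  assoc : ∀ u v : V, act.obj (u ⊗ v) ≅ act.obj v ⋙ act.obj u
  assoc_natural :
    ∀ {u u' v v' : V} (f : u ⟶ u') (g : v ⟶ v') (c : C),
      (act.map (f ⊗ₘ g)).app c ≫ (assoc u' v').hom.app c =
        (assoc u v).hom.app c ≫ (act.map f).app ((act.obj v).obj c) ≫
          (act.obj u').map ((act.map g).app c)
  triangle_left :
    ∀ (v : V) (c : C),
      (assoc (𝟙_ V) v).hom.app c ≫ lam.hom.app ((act.obj v).obj c) =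
        (act.map (λ_ v).hom).app c
  triangle_right :
    ∀ (v : V) (c : C),
      (assoc v (𝟙_ V)).hom.app c ≫ (act.obj v).map (lam.hom.app c) =
        (act.map (ρ_ v).hom).app c
  pentagon :
    ∀ (u v w : V) (c : C),
      (act.map (α_ u v w).hom).app c ≫ (assoc u (v ⊗ w)).hom.app c ≫
          (act.obj u).map ((assoc v w).hom.app c) =
        (assoc (u ⊗ v) w).hom.app c ≫ (assoc u v).hom.app ((act.obj w).obj c)

variable {V C}

/-- A right-closed structure on a `V`-action: each functor `(-) ⊳ c : V ⥤ C`
has a right adjoint `rhom c = C̲(c,-) : C ⥤ V`. -/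
structure RightClosed (A : MonAction V C) where
  rhom : C → C ⥤ V
  adj : ∀ c : C, A.act.flip.obj c ⊣ rhom c

/-- A left-closed structure on a `V`-action: each functor `v ⊳ (-) : C ⥤ C`
has a right adjoint `lhom v = ⟦v,-⟧ : C ⥤ C`. -/
structure LeftClosed (A : MonAction V C) where
  lhom : V → C ⥤ C
  adj : ∀ v : V, A.act.obj v ⊣ lhom v

variable {A : MonAction V C}

/-- Evaluation (counit) `ev_{a,x} : C̲(a,x) ⊳ a ⟶ x` of the right-closed structure. -/
def RightClosed.ev (R : RightClosed A) (a x : C) :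
    (A.act.obj ((R.rhom a).obj x)).obj a ⟶ x :=
  (R.adj a).counit.app x

/-- Evaluation (counit) `ev_{v,x} : v ⊳ ⟦v,x⟧ ⟶ x` of the left-closed structure. -/
def LeftClosed.ev (L : LeftClosed A) (v : V) (x : C) :
    (A.act.obj v).obj ((L.lhom v).obj x) ⟶ x :=
  (L.adj v).counit.app x

/-- Contravariant functorial action `C̲(f,x) : C̲(b,x) ⟶ C̲(a,x)` of the right-homs. -/
def RightClosed.rmap (R : RightClosed A) {a b : C} (f : a ⟶ b) (x : C) :
    (R.rhom b).obj x ⟶ (R.rhom a).obj x :=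
  ((R.adj a).homEquiv _ x) ((A.act.obj ((R.rhom b).obj x)).map f ≫ R.ev b x)

/-- Contravariant functorial action `⟦h,x⟧ : ⟦w,x⟧ ⟶ ⟦v,x⟧` of the left-homs. -/
def LeftClosed.lmap (L : LeftClosed A) {v w : V} (h : v ⟶ w) (x : C) :
    (L.lhom w).obj x ⟶ (L.lhom v).obj x :=
  ((L.adj v).homEquiv _ x) ((A.act.map h).app ((L.lhom w).obj x) ≫ L.ev w x)

variable (A) in
/-- A strong endofunctor on a `V`-action. -/
structure StrongEndo where
  F : C ⥤ C
  str : ∀ v : V, F ⋙ A.act.obj v ⟶ A.act.obj v ⋙ F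
  str_natural :
    ∀ {v w : V} (h : v ⟶ w) (c : C),
      (A.act.map h).app (F.obj c) ≫ (str w).app c =
        (str v).app c ≫ F.map ((A.act.map h).app c)
  str_lam :
    ∀ c : C,
      (str (𝟙_ V)).app c ≫ F.map (A.lam.hom.app c) = A.lam.hom.app (F.obj c)
  str_assoc :
    ∀ (u v : V) (c : C),
      (str (u ⊗ v)).app c ≫ F.map ((A.assoc u v).hom.app c) =
        (A.assoc u v).hom.app (F.obj c) ≫ (A.act.obj u).map ((str v).app c) ≫
          (str u).app ((A.act.obj v).obj c)

/-- Strong natural transformations between strong endofunctors. -/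
def IsStrongHom (F G : StrongEndo A) (τ : F.F ⟶ G.F) : Prop :=
  ∀ (v : V) (c : C),
    (A.act.obj v).map (τ.app c) ≫ (G.str v).app c =
      (F.str v).app c ≫ τ.app ((A.act.obj v).obj c)

variable (A) in
/-- A strong monad on a `V`-action: a strong endofunctor with a compatible
monad structure. -/
structure StrongMonad extends StrongEndo A where
  unit : 𝟭 C ⟶ F
  mul : F ⋙ F ⟶ F
  left_unit : ∀ c : C, unit.app (F.obj c) ≫ mul.app c = 𝟙 (F.obj c)
  right_unit : ∀ c : C, F.map (unit.app c) ≫ mul.app c = 𝟙 (F.obj c)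
  mul_assoc' : ∀ c : C, F.map (mul.app c) ≫ mul.app c = mul.app (F.obj c) ≫ mul.app c
  unit_str :
    ∀ (v : V) (c : C),
      (A.act.obj v).map (unit.app c) ≫ (str v).app c = unit.app ((A.act.obj v).obj c)
  mul_str :
    ∀ (v : V) (c : C),
      (str v).app (F.obj c) ≫ F.map ((str v).app c) ≫ mul.app ((A.act.obj v).obj c) =
        (A.act.obj v).map (mul.app c) ≫ (str v).app c

/-- The interpretation map `ι(s)_a : C̲(a,X) ⊳ T a ⟶ X` determined by a strength `σ`
and a `T`-algebra `s : T X ⟶ X`. -/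
def interpMap (R : RightClosed A) (T : C ⥤ C)
    (σ : ∀ v : V, T ⋙ A.act.obj v ⟶ A.act.obj v ⋙ T)
    {X : C} (s : T.obj X ⟶ X) (a : C) :
    (A.act.obj ((R.rhom a).obj X)).obj (T.obj a) ⟶ X :=
  (σ ((R.rhom a).obj X)).app a ≫ T.map (R.ev a X) ≫ s

/-- The interpretation `⟦t⟧_{(X,s)} : C̲(a,X) ⊳ c ⟶ X` of a Kleisli map `t : c ⟶ T a`. -/
def interp (R : RightClosed A) (T : C ⥤ C)
    (σ : ∀ v : V, T ⋙ A.act.obj v ⟶ A.act.obj v ⋙ T)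
    {X : C} (s : T.obj X ⟶ X) {c a : C} (t : c ⟶ T.obj a) :
    (A.act.obj ((R.rhom a).obj X)).obj c ⟶ X :=
  (A.act.obj ((R.rhom a).obj X)).map t ≫ interpMap R T σ s a

/-- Satisfaction of an equation `u ≡ v : c ⟶ T a` by an algebra `(X,s)`. -/
def Satisfies (R : RightClosed A) (T : C ⥤ C)
    (σ : ∀ v : V, T ⋙ A.act.obj v ⟶ A.act.obj v ⋙ T)
    {X : C} (s : T.obj X ⟶ X) {c a : C} (u v : c ⟶ T.obj a) : Prop :=
  interp R T σ s u = interp R T σ s v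

/-- A `T`-equation: a parallel pair of Kleisli maps. -/
structure TEq (T : C ⥤ C) where
  coar : C
  ar : C
  lhs : coar ⟶ T.obj ar
  rhs : coar ⟶ T.obj ar

variable (A) in
/-- A Monadic Equational System: a biclosed `V`-action together with a strong
monad and a set of equations. -/
structure MES where
  R : RightClosed A
  L : LeftClosed A
  T : StrongMonad A
  E : Set (TEq T.F)

/-- Eilenberg–Moore algebra laws for a strong monad. -/
def IsEMAlgebra (M : StrongMonad A) {X : C} (s : M.F.obj X ⟶ X) : Prop :=
  M.unit.app X ≫ s = 𝟙 X ∧ M.mul.app X ≫ s = M.F.map s ≫ s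

/-- An `S`-algebra: an Eilenberg–Moore algebra satisfying all the equations. -/
def IsSAlgebra (S : MES A) {X : C} (s : S.T.F.obj X ⟶ X) : Prop :=
  IsEMAlgebra S.T s ∧ ∀ e ∈ S.E, Satisfies S.R S.T.F S.T.str s e.lhs e.rhs

/-- Free `S`-algebras: a left adjoint (described by its universal property)
to the forgetful functor from `S`-algebras. -/
structure FreeAlgebras (S : MES A) where
  TS : C → C
  τ : ∀ X : C, S.T.F.obj (TS X) ⟶ TS X
  unit : ∀ X : C, X ⟶ TS X
  isAlg : ∀ X : C, IsSAlgebra S (τ X)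
  extend : ∀ (X : C) {Y : C} (t : S.T.F.obj Y ⟶ Y), IsSAlgebra S t →
    ∀ f : X ⟶ Y, ∃! g : TS X ⟶ Y, S.T.F.map g ≫ t = τ X ≫ g ∧ unit X ≫ g = f

/-- The lifted algebra `s_v : T ⟦v,X⟧ ⟶ ⟦v,X⟧` on a left-hom. -/
def liftAlg (L : LeftClosed A) (T : C ⥤ C)
    (σ : ∀ v : V, T ⋙ A.act.obj v ⟶ A.act.obj v ⋙ T)
    {X : C} (s : T.obj X ⟶ X) (v : V) :
    T.obj ((L.lhom v).obj X) ⟶ (L.lhom v).obj X :=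
  ((L.adj v).homEquiv _ X)
    ((σ v).app ((L.lhom v).obj X) ≫ T.map (L.ev v X) ≫ s)

/-- The object part `K_X(a) = ⟦C̲(a,X),X⟧` of the double-dualization construction. -/
def Kobj (R : RightClosed A) (L : LeftClosed A) (X a : C) : C :=
  (L.lhom ((R.rhom a).obj X)).obj X

/-- The morphism part of the double-dualization construction. -/
def Kmap (R : RightClosed A) (L : LeftClosed A) (X : C) {a b : C} (f : a ⟶ b) :
    Kobj R L X a ⟶ Kobj R L X b :=
  L.lmap (R.rmap f X) X

/-- The unit `a ⟶ K_X a` of the double-dualization monad: the transpose of the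
evaluation `ev_{a,X}`. -/
def ddUnit (R : RightClosed A) (L : LeftClosed A) (X a : C) : a ⟶ Kobj R L X a :=
  ((L.adj ((R.rhom a).obj X)).homEquiv a X) (R.ev a X)

/-- The map `δ_v : v ⟶ C̲(⟦v,X⟧,X)`: the transpose of the evaluation `ev_{v,X}`. -/
def dd (R : RightClosed A) (L : LeftClosed A) (X : C) (v : V) :
    v ⟶ (R.rhom ((L.lhom v).obj X)).obj X :=
  ((R.adj ((L.lhom v).obj X)).homEquiv v X) (L.ev v X)

/-- The multiplication `K_X (K_X a) ⟶ K_X a` of the double-dualization monad,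
namely `⟦δ_{C̲(a,X)},X⟧`. -/
def ddMult (R : RightClosed A) (L : LeftClosed A) (X a : C) :
    Kobj R L X (Kobj R L X a) ⟶ Kobj R L X a :=
  L.lmap (dd R L X ((R.rhom a).obj X)) X

/-- The map `C̲(v ⊳ a, X) ⊗ v ⟶ C̲(a,X)`, transpose of `ev ∘ assoc`. -/
def hatg (R : RightClosed A) (X : C) (v : V) (a : C) :
    ((R.rhom ((A.act.obj v).obj a)).obj X) ⊗ v ⟶ (R.rhom a).obj X :=
  ((R.adj a).homEquiv _ X)
    ((A.assoc ((R.rhom ((A.act.obj v).obj a)).obj X) v).hom.app a ≫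
      R.ev ((A.act.obj v).obj a) X)

/-- The clone strength `v ⊳ ⟦C̲(a,X),Y⟧ ⟶ ⟦C̲(v ⊳ a,X),Y⟧`. -/
def cloneStr (R : RightClosed A) (L : LeftClosed A) (X Y : C) (v : V) (a : C) :
    (A.act.obj v).obj ((L.lhom ((R.rhom a).obj X)).obj Y) ⟶
      (L.lhom ((R.rhom ((A.act.obj v).obj a)).obj X)).obj Y :=
  ((L.adj ((R.rhom ((A.act.obj v).obj a)).obj X)).homEquiv _ Y)
    ((A.assoc ((R.rhom ((A.act.obj v).obj a)).obj X) v).inv.app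
        ((L.lhom ((R.rhom a).obj X)).obj Y) ≫
      (A.act.map (hatg R X v a)).app ((L.lhom ((R.rhom a).obj X)).obj Y) ≫
      L.ev ((R.rhom a).obj X) Y)

/-- The counit `ε_X : K_X X ⟶ X` of the clone adjunction at `X`. -/
def cleval (R : RightClosed A) (L : LeftClosed A) (X : C) : Kobj R L X X ⟶ X :=
  L.lmap (((R.adj X).homEquiv (𝟙_ V) X) (A.lam.hom.app X)) X ≫
    A.lam.inv.app ((L.lhom (𝟙_ V)).obj X) ≫ L.ev (𝟙_ V) X

/-- The transpose `m(s)_a : T a ⟶ K_X a` of the interpretation map `ι(s)_a`. -/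
def mOf (R : RightClosed A) (L : LeftClosed A) (T : C ⥤ C)
    (σ : ∀ v : V, T ⋙ A.act.obj v ⟶ A.act.obj v ⋙ T)
    {X : C} (s : T.obj X ⟶ X) (a : C) :
    T.obj a ⟶ Kobj R L X a :=
  ((L.adj ((R.rhom a).obj X)).homEquiv (T.obj a) X) (interpMap R T σ s a)

/-- The identity strength on the identity functor. -/
def idStr (A : MonAction V C) (v : V) : 𝟭 C ⋙ A.act.obj v ⟶ A.act.obj v ⋙ 𝟭 C :=
  { app := fun c => 𝟙 ((A.act.obj v).obj c) }

/-- The unit of the clone monad: the clone transpose of the identity on `X`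
(computed through the identity strong functor). -/
def cloneUnit (R : RightClosed A) (L : LeftClosed A) (X a : C) : a ⟶ Kobj R L X a :=
  mOf R L (𝟭 C) (idStr A) (𝟙 X) a

/-- The multiplication of the clone monad: the clone transpose of
`ε_X ∘ K_X ε_X : K_X K_X X ⟶ X` computed through the composite `K_X ∘ K_X`
with its composite (clone) strength. -/
def cloneMult (R : RightClosed A) (L : LeftClosed A) (X a : C) :
    Kobj R L X (Kobj R L X a) ⟶ Kobj R L X a :=
  ((L.adj ((R.rhom a).obj X)).homEquiv _ X)
    (cloneStr R L X X ((R.rhom a).obj X) (Kobj R L X a) ≫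
      Kmap R L X (cloneStr R L X X ((R.rhom a).obj X) a) ≫
      Kmap R L X (Kmap R L X (R.ev a X)) ≫
      Kmap R L X (cleval R L X) ≫ cleval R L X)

end MonEq
namespace MonEq

section StrengthProof

variable {V : Type u₁} [Category.{v₁} V] [MonoidalCategory V]
variable {C : Type u₂} [Category.{v₂} C]
variable {A : MonAction V C}

/-- Transpose over the left-closed structure. -/
def tr (L : LeftClosed A) (v : V) {Z X : C} (f : (A.act.obj v).obj Z ⟶ X) :
    Z ⟶ (L.lhom v).obj X :=
  ((L.adj v).homEquiv Z X) f

/-- Untranspose over the left-closed structure. -/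
def untr (L : LeftClosed A) (v : V) {Z X : C} (f : Z ⟶ (L.lhom v).obj X) :
    (A.act.obj v).obj Z ⟶ X :=
  (A.act.obj v).map f ≫ L.ev v X

lemma untr_eq (L : LeftClosed A) (v : V) {Z X : C} (f : Z ⟶ (L.lhom v).obj X) :
    untr L v f = ((L.adj v).homEquiv Z X).symm f := by
  rw [Adjunction.homEquiv_counit]; rfl

lemma untr_tr (L : LeftClosed A) (v : V) {Z X : C} (f : (A.act.obj v).obj Z ⟶ X) :
    untr L v (tr L v f) = f := by
  rw [untr_eq, tr, Equiv.symm_apply_apply]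

lemma tr_untr (L : LeftClosed A) (v : V) {Z X : C} (f : Z ⟶ (L.lhom v).obj X) :
    tr L v (untr L v f) = f := by
  rw [untr_eq, tr, Equiv.apply_symm_apply]

lemma untr_inj (L : LeftClosed A) (v : V) {Z X : C} {f g : Z ⟶ (L.lhom v).obj X}
    (h : untr L v f = untr L v g) : f = g := by
  rw [← tr_untr L v f, ← tr_untr L v g, h]

lemma untr_comp (L : LeftClosed A) (v : V) {Z' Z X : C} (f : Z' ⟶ Z)
    (g : Z ⟶ (L.lhom v).obj X) :
    untr L v (f ≫ g) = (A.act.obj v).map f ≫ untr L v g := by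
  simp [untr]

lemma untr_post (L : LeftClosed A) (v : V) {Z X X' : C} (f : Z ⟶ (L.lhom v).obj X)
    (h : X ⟶ X') :
    untr L v (f ≫ (L.lhom v).map h) = untr L v f ≫ h := by
  simp only [untr, Functor.map_comp, Category.assoc]
  congr 1
  exact ((L.adj v).counit.naturality h)

lemma tr_whisker (L : LeftClosed A) (v : V) {Z' Z X : C} (f : Z' ⟶ Z)
    (g : (A.act.obj v).obj Z ⟶ X) :
    tr L v ((A.act.obj v).map f ≫ g) = f ≫ tr L v g :=
  Adjunction.homEquiv_naturality_left _ _ _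

lemma tr_post (L : LeftClosed A) (v : V) {Z X X' : C} (g : (A.act.obj v).obj Z ⟶ X)
    (h : X ⟶ X') :
    tr L v (g ≫ h) = tr L v g ≫ (L.lhom v).map h :=
  Adjunction.homEquiv_naturality_right _ _ _

lemma untr_id (L : LeftClosed A) (v : V) {X : C} :
    untr L v (𝟙 ((L.lhom v).obj X)) = L.ev v X := by
  simp [untr]

/-- Untransposition over the right-closed structure recovers the original map. -/
lemma R_untr_tr (R : RightClosed A) (a : C) {u : V} {X : C}
    (f : (A.act.obj u).obj a ⟶ X) :
    (A.act.map (((R.adj a).homEquiv u X) f)).app a ≫ R.ev a X = f := by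
  have h := ((R.adj a).homEquiv u X).symm_apply_apply f
  rw [Adjunction.homEquiv_counit] at h
  exact h

end StrengthProof

end MonEq
namespace MonEq

section LiftAlgebra

variable {V : Type u₁} [Category.{v₁} V] [MonoidalCategory V]
variable {C : Type u₂} [Category.{v₂} C]
variable {A : MonAction V C}

lemma untr_liftAlg (L : LeftClosed A) (M : StrongMonad A) {X : C}
    (s : M.F.obj X ⟶ X) (v : V) :
    untr L v (liftAlg L M.F M.str s v) =
      (M.str v).app ((L.lhom v).obj X) ≫ M.F.map (L.ev v X) ≫ s := by
  rw [liftAlg, show ((L.adj v).homEquiv _ X)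
      ((M.str v).app ((L.lhom v).obj X) ≫ M.F.map (L.ev v X) ≫ s) =
      tr L v ((M.str v).app ((L.lhom v).obj X) ≫ M.F.map (L.ev v X) ≫ s) from rfl,
    untr_tr]

/-- `untr` of `F g ≫ s_v` : the key computation for homomorphism transposes. -/
lemma untr_Fmap_liftAlg (L : LeftClosed A) (M : StrongMonad A) {Z X : C}
    (s : M.F.obj X ⟶ X) (v : V) (g : Z ⟶ (L.lhom v).obj X) :
    untr L v (M.F.map g ≫ liftAlg L M.F M.str s v) =
      (M.str v).app Z ≫ M.F.map (untr L v g) ≫ s := by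
  rw [untr_comp, untr_liftAlg]
  have h := (M.str v).naturality g
  simp only [Functor.comp_obj, Functor.comp_map] at h
  rw [← Category.assoc, h, Category.assoc, untr]
  simp [Functor.map_comp]

/-- The lifted algebra on a left-hom is again an Eilenberg–Moore algebra. -/
lemma liftAlg_isEM (L : LeftClosed A) (M : StrongMonad A) {X : C}
    (s : M.F.obj X ⟶ X) (hs : IsEMAlgebra M s) (v : V) :
    IsEMAlgebra M (liftAlg L M.F M.str s v) := by
  obtain ⟨h1, h2⟩ := hs
  constructor
  · apply untr_inj L v
    rw [untr_comp, untr_liftAlg, untr_id]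
    rw [← Category.assoc, M.unit_str v ((L.lhom v).obj X), ← Category.assoc,
      ← M.unit.naturality (L.ev v X)]
    simp only [Functor.id_map, Category.assoc]
    rw [h1]
    simp
  · apply untr_inj L v
    rw [untr_comp, untr_liftAlg, untr_Fmap_liftAlg, untr_liftAlg]
    -- LHS : v ⊳ μ ≫ σ ≫ F ev ≫ s
    have hmul := M.mul_str v ((L.lhom v).obj X)
    -- (str v).app (F ⟦⟧) ≫ F (str v).app ⟦⟧ ≫ μ.app (v⊳⟦⟧) = v⊳μ ≫ str
    rw [← Category.assoc, ← hmul]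
    have hμn := M.mul.naturality (L.ev v X)
    simp only [Functor.comp_obj, Functor.comp_map] at hμn
    simp only [Category.assoc]
    rw [← reassoc_of% hμn]
    simp only [Category.assoc, Functor.map_comp]
    rw [h2]

/-- The comparison map `v ⊗ C̲(a,⟦v,X⟧) ⟶ C̲(a,X)`. -/
def kMap (R : RightClosed A) (L : LeftClosed A) (v : V) (X a : C) :
    v ⊗ (R.rhom a).obj ((L.lhom v).obj X) ⟶ (R.rhom a).obj X :=
  ((R.adj a).homEquiv _ X)
    ((A.assoc v ((R.rhom a).obj ((L.lhom v).obj X))).hom.app a ≫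
      (A.act.obj v).map (R.ev a ((L.lhom v).obj X)) ≫ L.ev v X)

/-- Key transfer lemma: the untranspose of the interpretation in a lifted
algebra factors through the interpretation in the original algebra. -/
lemma untr_interp_lift (R : RightClosed A) (L : LeftClosed A) (M : StrongMonad A)
    (v : V) {X : C} (s : M.F.obj X ⟶ X) {c a : C} (t : c ⟶ M.F.obj a) :
    untr L v (interp R M.F M.str (liftAlg L M.F M.str s v) t) =
      (A.assoc v ((R.rhom a).obj ((L.lhom v).obj X))).inv.app c ≫
        (A.act.map (kMap R L v X a)).app c ≫ interp R M.F M.str s t := by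
  set w := (R.rhom a).obj ((L.lhom v).obj X) with hw
  rw [interp, interpMap, untr_comp, untr_comp, untr_comp, untr_liftAlg]
  -- strength naturality in C
  have hnat := (M.str v).naturality (R.ev a ((L.lhom v).obj X))
  simp only [Functor.comp_obj, Functor.comp_map] at hnat
  rw [reassoc_of% hnat]
  -- str_assoc, rearranged
  have hsa := M.str_assoc v w a
  have hsa' : (A.act.obj v).map ((M.str w).app a) ≫ (M.str v).app ((A.act.obj w).obj a) =
      (A.assoc v w).inv.app (M.F.obj a) ≫ (M.str (v ⊗ w)).app a ≫
        M.F.map ((A.assoc v w).hom.app a) := by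
    rw [hsa, Iso.inv_hom_id_app_assoc]
  rw [reassoc_of% hsa']
  -- fold the evaluation composite into kMap
  have hk : (A.assoc v w).hom.app a ≫ (A.act.obj v).map (R.ev a ((L.lhom v).obj X)) ≫
      L.ev v X = (A.act.map (kMap R L v X a)).app a ≫ R.ev a X := by
    rw [kMap, R_untr_tr]
  have hk2 := congrArg (fun z => M.F.map z ≫ s) hk
  simp only [Functor.map_comp, Category.assoc] at hk2
  rw [hk2]
  -- strength naturality in V
  have hstr2 := M.str_natural (kMap R L v X a) a
  rw [← reassoc_of% hstr2]
  -- naturality of assoc.inv and of act.map kMap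
  have hinv := (A.assoc v w).inv.naturality t
  simp only [Functor.comp_obj, Functor.comp_map] at hinv
  rw [reassoc_of% hinv]
  have hknat := (A.act.map (kMap R L v X a)).naturality t
  rw [reassoc_of% hknat]
  rfl

/-- Satisfaction of equations transfers to lifted algebras. -/
lemma satisfies_lift (R : RightClosed A) (L : LeftClosed A) (M : StrongMonad A)
    (v : V) {X : C} (s : M.F.obj X ⟶ X) {c a : C} {u u' : c ⟶ M.F.obj a}
    (h : Satisfies R M.F M.str s u u') :
    Satisfies R M.F M.str (liftAlg L M.F M.str s v) u u' := by
  unfold Satisfies at h ⊢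
  apply untr_inj L v
  rw [untr_interp_lift, untr_interp_lift, h]

/-- `S`-algebra structure lifts to left-homs. -/
lemma isSAlgebra_lift (S : MES A) {X : C} (s : S.T.F.obj X ⟶ X)
    (hs : IsSAlgebra S s) (v : V) :
    IsSAlgebra S (liftAlg S.L S.T.F S.T.str s v) := by
  exact ⟨liftAlg_isEM S.L S.T s hs.1 v,
    fun e he => satisfies_lift S.R S.L S.T v s (hs.2 e he)⟩


end LiftAlgebra

end MonEq
namespace MonEq

section HomLemmas

variable {V : Type u₁} [Category.{v₁} V] [MonoidalCategory V]
variable {C : Type u₂} [Category.{v₂} C]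
variable {A : MonAction V C}

lemma map_tr_ev (L : LeftClosed A) (v : V) {Z X : C} (f : (A.act.obj v).obj Z ⟶ X) :
    (A.act.obj v).map (tr L v f) ≫ L.ev v X = f :=
  untr_tr L v f

lemma map_liftAlg_ev (L : LeftClosed A) (M : StrongMonad A) {X : C}
    (t : M.F.obj X ⟶ X) (v : V) :
    (A.act.obj v).map (liftAlg L M.F M.str t v) ≫ L.ev v X =
      (M.str v).app ((L.lhom v).obj X) ≫ M.F.map (L.ev v X) ≫ t :=
  untr_liftAlg L M t v

lemma liftAlg_map_hom (L : LeftClosed A) (M : StrongMonad A) {Y Z : C}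
    (t : M.F.obj Y ⟶ Y) (t' : M.F.obj Z ⟶ Z) (h : Y ⟶ Z)
    (hh : M.F.map h ≫ t' = t ≫ h) (v : V) :
    M.F.map ((L.lhom v).map h) ≫ liftAlg L M.F M.str t' v =
      liftAlg L M.F M.str t v ≫ (L.lhom v).map h := by
  apply untr_inj L v
  rw [untr_Fmap_liftAlg, untr_post, untr_liftAlg]
  have hev : untr L v ((L.lhom v).map h) = L.ev v Y ≫ h := by
    rw [show (L.lhom v).map h = 𝟙 _ ≫ (L.lhom v).map h by simp, untr_post, untr_id]
  rw [hev]
  simp only [Functor.map_comp, Category.assoc, hh]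

lemma untr_lmap (L : LeftClosed A) {v w : V} (h : v ⟶ w) (Y : C) :
    untr L v (L.lmap h Y) = (A.act.map h).app ((L.lhom w).obj Y) ≫ L.ev w Y :=
  untr_tr L v _

lemma lmap_hom (L : LeftClosed A) (M : StrongMonad A) {Y : C}
    (t : M.F.obj Y ⟶ Y) {v w : V} (h : v ⟶ w) :
    M.F.map (L.lmap h Y) ≫ liftAlg L M.F M.str t v =
      liftAlg L M.F M.str t w ≫ L.lmap h Y := by
  apply untr_inj L v
  rw [untr_Fmap_liftAlg, untr_lmap, untr_comp, untr_lmap]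
  simp only [Functor.map_comp, Category.assoc]
  rw [← reassoc_of% (M.str_natural h ((L.lhom w).obj Y))]
  have hn := (A.act.map h).naturality (liftAlg L M.F M.str t w)
  rw [reassoc_of% hn, map_liftAlg_ev]

lemma tr_vshift (L : LeftClosed A) {v w : V} (h : v ⟶ w) {Z X : C}
    (p : (A.act.obj w).obj Z ⟶ X) :
    tr L v ((A.act.map h).app Z ≫ p) = tr L w p ≫ L.lmap h X := by
  apply untr_inj L v
  rw [untr_tr, untr_comp, untr_lmap]
  have hn := (A.act.map h).naturality (tr L w p)
  rw [reassoc_of% hn, map_tr_ev]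

lemma lamTr_hom (L : LeftClosed A) (M : StrongMonad A) {Y : C}
    (t : M.F.obj Y ⟶ Y) :
    M.F.map (tr L (𝟙_ V) (A.lam.hom.app Y)) ≫ liftAlg L M.F M.str t (𝟙_ V) =
      t ≫ tr L (𝟙_ V) (A.lam.hom.app Y) := by
  apply untr_inj L (𝟙_ V)
  rw [untr_Fmap_liftAlg, untr_tr, untr_comp, untr_tr]
  rw [reassoc_of% (M.str_lam Y)]
  exact (A.lam.hom.naturality t).symm

/-- The comparison map `⟦v,⟦u,Y⟧⟧ ⟶ ⟦u ⊗ v, Y⟧`. -/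
def mComp (L : LeftClosed A) (u v : V) (Y : C) :
    (L.lhom v).obj ((L.lhom u).obj Y) ⟶ (L.lhom (u ⊗ v)).obj Y :=
  tr L (u ⊗ v) ((A.assoc u v).hom.app ((L.lhom v).obj ((L.lhom u).obj Y)) ≫
    (A.act.obj u).map (L.ev v ((L.lhom u).obj Y)) ≫ L.ev u Y)

lemma untr_mComp (L : LeftClosed A) (u v : V) (Y : C) :
    untr L (u ⊗ v) (mComp L u v Y) =
      (A.assoc u v).hom.app ((L.lhom v).obj ((L.lhom u).obj Y)) ≫
        (A.act.obj u).map (L.ev v ((L.lhom u).obj Y)) ≫ L.ev u Y :=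
  untr_tr L (u ⊗ v) _

lemma tr_twostep (L : LeftClosed A) (u v : V) {Z Y : C}
    (q : (A.act.obj u).obj ((A.act.obj v).obj Z) ⟶ Y) :
    tr L (u ⊗ v) ((A.assoc u v).hom.app Z ≫ q) =
      tr L v (tr L u q) ≫ mComp L u v Y := by
  apply untr_inj L (u ⊗ v)
  rw [untr_tr, untr_comp, untr_mComp]
  have hn := (A.assoc u v).hom.naturality (tr L v (tr L u q))
  simp only [Functor.comp_obj, Functor.comp_map] at hn
  rw [reassoc_of% hn]
  congr 1
  rw [← Functor.map_comp_assoc, map_tr_ev, map_tr_ev]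

lemma mComp_hom (L : LeftClosed A) (M : StrongMonad A) (u v : V) {Y : C}
    (t : M.F.obj Y ⟶ Y) :
    M.F.map (mComp L u v Y) ≫ liftAlg L M.F M.str t (u ⊗ v) =
      liftAlg L M.F M.str (liftAlg L M.F M.str t u) v ≫ mComp L u v Y := by
  apply untr_inj L (u ⊗ v)
  rw [untr_Fmap_liftAlg, untr_mComp, untr_comp, untr_mComp]
  simp only [Functor.map_comp, Category.assoc]
  rw [reassoc_of% (M.str_assoc u v ((L.lhom v).obj ((L.lhom u).obj Y)))]
  rw [← reassoc_of% ((M.str u).naturality (L.ev v ((L.lhom u).obj Y)))]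
  rw [← map_liftAlg_ev L M t u]
  have hn := (A.assoc u v).hom.naturality (liftAlg L M.F M.str (liftAlg L M.F M.str t u) v)
  simp only [Functor.comp_obj, Functor.comp_map] at hn
  rw [reassoc_of% hn]
  congr 1
  rw [← Functor.map_comp_assoc, ← Functor.map_comp_assoc,
    ← Functor.map_comp_assoc, map_liftAlg_ev]
  simp only [Category.assoc]

lemma tr_inj (L : LeftClosed A) (v : V) {Z X : C} {f g : (A.act.obj v).obj Z ⟶ X}
    (h : tr L v f = tr L v g) : f = g := by
  rw [← untr_tr L v f, ← untr_tr L v g, h]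

lemma tr_precomp_eq (L : LeftClosed A) (v : V) {Z P Q : C} (e : Z ⟶ P)
    (φ : (A.act.obj v).obj P ⟶ Q) (e' : (A.act.obj v).obj Z ⟶ Q) :
    (e ≫ tr L v φ = tr L v e') ↔ ((A.act.obj v).map e ≫ φ = e') := by
  rw [← tr_whisker]
  constructor
  · intro h
    have := congrArg (untr L v) h
    rwa [untr_tr, untr_tr] at this
  · intro h; rw [h]

lemma tr_hom_iff (L : LeftClosed A) (M : StrongMonad A) {P Q : C}
    (tP : M.F.obj P ⟶ P) (tQ : M.F.obj Q ⟶ Q) (v : V)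
    (φ : (A.act.obj v).obj P ⟶ Q) :
    (M.F.map (tr L v φ) ≫ liftAlg L M.F M.str tQ v = tP ≫ tr L v φ) ↔
      ((A.act.obj v).map tP ≫ φ = (M.str v).app P ≫ M.F.map φ ≫ tQ) := by
  constructor
  · intro h
    have := congrArg (untr L v) h
    rw [untr_Fmap_liftAlg, untr_tr, untr_comp, untr_tr] at this
    exact this.symm
  · intro h
    apply untr_inj L v
    rw [untr_Fmap_liftAlg, untr_tr, untr_comp, untr_tr, h]

lemma hom_comp (T : C ⥤ C) {X Y Z : C} {tX : T.obj X ⟶ X} {tY : T.obj Y ⟶ Y}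
    {tZ : T.obj Z ⟶ Z} {p : X ⟶ Y} {q : Y ⟶ Z}
    (hp : T.map p ≫ tY = tX ≫ p) (hq : T.map q ≫ tZ = tY ≫ q) :
    T.map (p ≫ q) ≫ tZ = tX ≫ (p ≫ q) := by
  rw [Functor.map_comp, Category.assoc, hq, reassoc_of% hp]

end HomLemmas

end MonEq

namespace MonEq

/-- **The free `S`-algebra monad of a MES is strong** (Theorem 5.? of the
paper).  For a MES `S = (V,C,T,E)` admitting free algebras, the induced free
`S`-algebra monad `T_S = (T_S, η^S, μ^S)` carries a unique strength `φ^S`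
compatible with the strength of `T` via the free-algebra structure maps
`τ X : T (T_S X) ⟶ T_S X`, and with it `T_S` is a strong monad. -/
theorem free_algebra_monad_is_strong
    {V : Type u₁} [Category.{v₁} V] [MonoidalCategory V]
    {C : Type u₂} [Category.{v₂} C]
    {A : MonAction V C} (S : MES A)
    -- the free `S`-algebra monad `T_S` induced by the adjunction
    (TS : C ⥤ C) (τ : ∀ X : C, S.T.F.obj (TS.obj X) ⟶ TS.obj X)
    (ηS : 𝟭 C ⟶ TS) (μS : TS ⋙ TS ⟶ TS)
    (hAlg : ∀ X : C, IsSAlgebra S (τ X))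
    (hτnat : ∀ {X Y : C} (f : X ⟶ Y),
      S.T.F.map (TS.map f) ≫ τ Y = τ X ≫ TS.map f)
    (universal : ∀ (X : C) {Y : C} (t : S.T.F.obj Y ⟶ Y), IsSAlgebra S t →
      ∀ f : X ⟶ Y, ∃! g : TS.obj X ⟶ Y,
        S.T.F.map g ≫ t = τ X ≫ g ∧ ηS.app X ≫ g = f)
    -- `μ^S_X` is the unique homomorphic extension of the identity on `T_S X`
    (hμ_ext : ∀ X : C, ηS.app (TS.obj X) ≫ μS.app X = 𝟙 (TS.obj X))
    (hμ_hom : ∀ X : C, S.T.F.map (μS.app X) ≫ τ X = τ (TS.obj X) ≫ μS.app X)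
    -- monad laws of the induced monad
    (h_right : ∀ X : C, TS.map (ηS.app X) ≫ μS.app X = 𝟙 (TS.obj X))
    (h_assoc : ∀ X : C, TS.map (μS.app X) ≫ μS.app X = μS.app (TS.obj X) ≫ μS.app X) :
    -- `T_S` carries a unique strength compatible with that of `T`
    (∃! φS : ∀ (v : V) (X : C),
        (A.act.obj v).obj (TS.obj X) ⟶ TS.obj ((A.act.obj v).obj X),
      (∀ (v : V) (X : C),
        (A.act.obj v).map (ηS.app X) ≫ φS v X = ηS.app ((A.act.obj v).obj X)) ∧
      (∀ (v : V) (X : C),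
        (A.act.obj v).map (τ X) ≫ φS v X =
          (S.T.str v).app (TS.obj X) ≫ S.T.F.map (φS v X) ≫ τ ((A.act.obj v).obj X))) ∧
    -- and with it `T_S` is a strong monad
    (∀ φS : ∀ (v : V) (X : C),
        (A.act.obj v).obj (TS.obj X) ⟶ TS.obj ((A.act.obj v).obj X),
      ((∀ (v : V) (X : C),
        (A.act.obj v).map (ηS.app X) ≫ φS v X = ηS.app ((A.act.obj v).obj X)) ∧
       (∀ (v : V) (X : C),
        (A.act.obj v).map (τ X) ≫ φS v X =
          (S.T.str v).app (TS.obj X) ≫ S.T.F.map (φS v X) ≫ τ ((A.act.obj v).obj X))) →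
      (∀ (v : V) {X Y : C} (f : X ⟶ Y),
        (A.act.obj v).map (TS.map f) ≫ φS v Y = φS v X ≫ TS.map ((A.act.obj v).map f)) ∧
      (∀ {v w : V} (h : v ⟶ w) (X : C),
        (A.act.map h).app (TS.obj X) ≫ φS w X = φS v X ≫ TS.map ((A.act.map h).app X)) ∧
      (∀ X : C,
        φS (𝟙_ V) X ≫ TS.map (A.lam.hom.app X) = A.lam.hom.app (TS.obj X)) ∧
      (∀ (u v : V) (X : C),
        φS (u ⊗ v) X ≫ TS.map ((A.assoc u v).hom.app X) =
          (A.assoc u v).hom.app (TS.obj X) ≫ (A.act.obj u).map (φS v X) ≫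
            φS u ((A.act.obj v).obj X)) ∧
      (∀ (v : V) (X : C),
        (A.act.obj v).map (ηS.app X) ≫ φS v X = ηS.app ((A.act.obj v).obj X)) ∧
      (∀ (v : V) (X : C),
        φS v (TS.obj X) ≫ TS.map (φS v X) ≫ μS.app ((A.act.obj v).obj X) =
          (A.act.obj v).map (μS.app X) ≫ φS v X)) := by

  classical
  have alg : ∀ (v : V) {Y : C} (t : S.T.F.obj Y ⟶ Y), IsSAlgebra S t →
      IsSAlgebra S (liftAlg S.L S.T.F S.T.str t v) :=
    by intro v Y t ht; exact isSAlgebra_lift S t ht v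
  have ηnat : ∀ {X Y : C} (f : X ⟶ Y), f ≫ ηS.app Y = ηS.app X ≫ TS.map f := by
    intro X Y f; simpa using ηS.naturality f
  have ext_unique : ∀ (X : C) {Y : C} (t : S.T.F.obj Y ⟶ Y), IsSAlgebra S t →
      ∀ g₁ g₂ : TS.obj X ⟶ Y, S.T.F.map g₁ ≫ t = τ X ≫ g₁ →
        S.T.F.map g₂ ≫ t = τ X ≫ g₂ → ηS.app X ≫ g₁ = ηS.app X ≫ g₂ → g₁ = g₂ := by
    intro X Y t ht g₁ g₂ h₁ h₂ hu
    obtain ⟨g, -, hg⟩ := universal X t ht (ηS.app X ≫ g₁)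
    rw [hg g₁ ⟨h₁, rfl⟩, hg g₂ ⟨h₂, hu.symm⟩]
  have Euniv : ∀ (v : V) (X : C),
      ∃! g : TS.obj X ⟶ (S.L.lhom v).obj (TS.obj ((A.act.obj v).obj X)),
        S.T.F.map g ≫ liftAlg S.L S.T.F S.T.str (τ ((A.act.obj v).obj X)) v = τ X ≫ g ∧
          ηS.app X ≫ g = tr S.L v (ηS.app ((A.act.obj v).obj X)) :=
    fun v X => universal X _ (alg v _ (hAlg _)) _
  constructor
  · refine ⟨fun v X => untr S.L v (Euniv v X).choose, ⟨?_, ?_⟩, ?_⟩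
    · intro v X
      have h := (Euniv v X).choose_spec.1.2
      rw [← tr_untr S.L v (Euniv v X).choose] at h
      exact (tr_precomp_eq S.L v _ _ _).mp h
    · intro v X
      have h := (Euniv v X).choose_spec.1.1
      rw [← tr_untr S.L v (Euniv v X).choose] at h
      exact (tr_hom_iff S.L S.T _ _ v _).mp h
    · intro ψ hψ
      funext v X
      have h := (Euniv v X).choose_spec.2 (tr S.L v (ψ v X))
        ⟨(tr_hom_iff S.L S.T _ _ v _).mpr (hψ.2 v X),
          (tr_precomp_eq S.L v _ _ _).mpr (hψ.1 v X)⟩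
      rw [← untr_tr S.L v (ψ v X), h]
  · rintro φ ⟨hη, hτc⟩
    have ghom : ∀ (v : V) (X : C),
        S.T.F.map (tr S.L v (φ v X)) ≫
            liftAlg S.L S.T.F S.T.str (τ ((A.act.obj v).obj X)) v =
          τ X ≫ tr S.L v (φ v X) :=
      fun v X => (tr_hom_iff S.L S.T _ _ v _).mpr (hτc v X)
    have gunit : ∀ (v : V) (X : C),
        ηS.app X ≫ tr S.L v (φ v X) = tr S.L v (ηS.app ((A.act.obj v).obj X)) :=
      fun v X => (tr_precomp_eq S.L v _ _ _).mpr (hη v X)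
    refine ⟨?_, ?_, ?_, ?_, hη, ?_⟩
    · -- naturality in C
      intro v X Y f
      apply tr_inj S.L v
      rw [tr_whisker, tr_post]
      exact ext_unique X _ (alg v _ (hAlg _)) _ _
        (hom_comp S.T.F (hτnat f) (ghom v Y))
        (hom_comp S.T.F (ghom v X)
          (liftAlg_map_hom S.L S.T _ _ _ (hτnat ((A.act.obj v).map f)) v))
        (by
          rw [← Category.assoc, ← ηnat f, Category.assoc, gunit v Y, ← tr_whisker,
            ηnat ((A.act.obj v).map f), reassoc_of% (gunit v X), ← tr_post])
    · -- naturality in V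
      intro v w h X
      apply tr_inj S.L v
      rw [tr_vshift, tr_post]
      exact ext_unique X _ (alg v _ (hAlg _)) _ _
        (hom_comp S.T.F (ghom w X) (lmap_hom S.L S.T _ h))
        (hom_comp S.T.F (ghom v X)
          (liftAlg_map_hom S.L S.T _ _ _ (hτnat ((A.act.map h).app X)) v))
        (by
          rw [reassoc_of% (gunit w X), reassoc_of% (gunit v X), ← tr_post,
            ← ηnat ((A.act.map h).app X), tr_vshift])
    · -- unitor law
      intro X
      apply tr_inj S.L (𝟙_ V)
      rw [tr_post]
      exact ext_unique X _ (alg (𝟙_ V) _ (hAlg _)) _ _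
        (hom_comp S.T.F (ghom (𝟙_ V) X)
          (liftAlg_map_hom S.L S.T _ _ _ (hτnat (A.lam.hom.app X)) (𝟙_ V)))
        (lamTr_hom S.L S.T (τ X))
        (by
          rw [reassoc_of% (gunit (𝟙_ V) X), ← tr_post, ← ηnat (A.lam.hom.app X),
            ← tr_whisker, A.lam.hom.naturality (ηS.app X)]
          simp only [Functor.id_map, Functor.id_obj])
    · -- associator law
      intro u v X
      apply tr_inj S.L (u ⊗ v)
      rw [tr_post, tr_twostep, tr_whisker, tr_post]
      refine ext_unique X _ (alg (u ⊗ v) _ (hAlg _)) _ _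
        (hom_comp S.T.F (ghom (u ⊗ v) X)
          (liftAlg_map_hom S.L S.T _ _ _ (hτnat ((A.assoc u v).hom.app X)) (u ⊗ v)))
        (hom_comp S.T.F
          (hom_comp S.T.F (ghom v X)
            (liftAlg_map_hom S.L S.T _ _ _ (ghom u ((A.act.obj v).obj X)) v))
          (mComp_hom S.L S.T u v (τ _)))
        ?_
      calc ηS.app X ≫ tr S.L (u ⊗ v) (φ (u ⊗ v) X) ≫
            (S.L.lhom (u ⊗ v)).map (TS.map ((A.assoc u v).hom.app X))
          = tr S.L (u ⊗ v) (ηS.app ((A.act.obj (u ⊗ v)).obj X) ≫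
              TS.map ((A.assoc u v).hom.app X)) := by
            rw [reassoc_of% (gunit (u ⊗ v) X), ← tr_post]
        _ = tr S.L (u ⊗ v) ((A.assoc u v).hom.app X ≫
              ηS.app ((A.act.obj v ⋙ A.act.obj u).obj X)) := by
            rw [ηnat ((A.assoc u v).hom.app X)]
        _ = tr S.L v (tr S.L u (ηS.app ((A.act.obj v ⋙ A.act.obj u).obj X))) ≫
              mComp S.L u v _ := by rw [tr_twostep]
        _ = tr S.L v (tr S.L u (ηS.app ((A.act.obj u).obj ((A.act.obj v).obj X)))) ≫
              mComp S.L u v (TS.obj ((A.act.obj u).obj ((A.act.obj v).obj X))) := rfl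
        _ = tr S.L v (ηS.app ((A.act.obj v).obj X) ≫
              tr S.L u (φ u ((A.act.obj v).obj X))) ≫
              mComp S.L u v (TS.obj ((A.act.obj u).obj ((A.act.obj v).obj X))) := by
            rw [← gunit u ((A.act.obj v).obj X)]
        _ = ηS.app X ≫ (tr S.L v (φ v X) ≫
              (S.L.lhom v).map (tr S.L u (φ u ((A.act.obj v).obj X)))) ≫
              mComp S.L u v (TS.obj ((A.act.obj u).obj ((A.act.obj v).obj X))) := by
            rw [tr_post, ← reassoc_of% (gunit v X)]
            simp only [Category.assoc]
    · -- multiplication law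
      intro v X
      apply tr_inj S.L v
      rw [tr_post, tr_whisker]
      exact ext_unique (TS.obj X) _ (alg v _ (hAlg _)) _ _
        (hom_comp S.T.F (ghom v (TS.obj X))
          (liftAlg_map_hom S.L S.T _ _ _
            (hom_comp S.T.F (hτnat (φ v X)) (hμ_hom _)) v))
        (hom_comp S.T.F (hμ_hom X) (ghom v X))
        (by
          rw [reassoc_of% (gunit v (TS.obj X)), ← tr_post,
            ← reassoc_of% (ηnat (φ v X)), hμ_ext, reassoc_of% (hμ_ext X)]
          simp)

end MonEq
end

section
/- For a Monadic Equational System S = (V, C, T, E) admitting free algebras, the quotient monad morphism q^S : T → T_S is a strong monad morphism; that is, for all V ∈ V and X ∈ C, q^S_{V⊳X} ∘ φ_{V,X} = φ^S_{V,X} ∘ (V ⊳ q^S_X) : V ⊳ TX → T_S(V ⊳ X), where φ and φ^S are the strengths of T and of the free S-algebra monad T_S respectively. -/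
open CategoryTheory MonoidalCategory Limits

universe w v₁ v₂ v₃ u₁ u₂ u₃

namespace MonEq

/-- **The quotient monad morphism is strong** (Theorem 7.? of the paper).
For a MES `S` admitting free algebras, the quotient maps
`q X : T X ⟶ T_S X` (the unique homomorphic extensions
`(T X, μ_X) ⟶ (T_S X, τ X)` of `η^S_X`) commute with the strengths of `T`
and of the free `S`-algebra monad `T_S` (the latter being characterized by
compatibility with the free-algebra structure maps):
`q (v ⊳ X) ∘ φ_{v,X} = φ^S_{v,X} ∘ (v ⊳ q X)`. -/
theorem quotient_monad_morphism_is_strong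
    {V : Type u₁} [Category.{v₁} V] [MonoidalCategory V]
    {C : Type u₂} [Category.{v₂} C]
    {A : MonAction V C} (S : MES A) (FA : FreeAlgebras S)
    -- the quotient maps
    (q : ∀ X : C, S.T.F.obj X ⟶ FA.TS X)
    (hq_hom : ∀ X : C, S.T.F.map (q X) ≫ FA.τ X = S.T.mul.app X ≫ q X)
    (hq_unit : ∀ X : C, S.T.unit.app X ≫ q X = FA.unit X)
    -- the canonical strength of the free `S`-algebra monad
    (φS : ∀ (v : V) (X : C),
      (A.act.obj v).obj (FA.TS X) ⟶ FA.TS ((A.act.obj v).obj X))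
    (hφS_unit : ∀ (v : V) (X : C),
      (A.act.obj v).map (FA.unit X) ≫ φS v X = FA.unit ((A.act.obj v).obj X))
    (hφS_hom : ∀ (v : V) (X : C),
      (A.act.obj v).map (FA.τ X) ≫ φS v X =
        (S.T.str v).app (FA.TS X) ≫ S.T.F.map (φS v X) ≫ FA.τ ((A.act.obj v).obj X)) :
    ∀ (v : V) (X : C),
      (S.T.str v).app X ≫ q ((A.act.obj v).obj X) =
        (A.act.obj v).map (q X) ≫ φS v X := by
  intro v X
  -- Any map satisfying the "strength-algebra homomorphism" equation is
  -- determined by its restriction along `v ⊳ η`.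
  have key : ∀ f : (A.act.obj v).obj (S.T.F.obj X) ⟶ FA.TS ((A.act.obj v).obj X),
      (S.T.str v).app (S.T.F.obj X) ≫ S.T.F.map f ≫ FA.τ ((A.act.obj v).obj X) =
        (A.act.obj v).map (S.T.mul.app X) ≫ f →
      f = (S.T.str v).app X ≫
          S.T.F.map ((A.act.obj v).map (S.T.unit.app X) ≫ f) ≫
            FA.τ ((A.act.obj v).obj X) := by
    intro f hf
    have nat := (S.T.str v).naturality (S.T.unit.app X)
    simp only [Functor.comp_map, Functor.id_obj] at nat
    have h1 : (A.act.obj v).map (S.T.F.map (S.T.unit.app X)) ≫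
        (S.T.str v).app (S.T.F.obj X) ≫ S.T.F.map f ≫
          FA.τ ((A.act.obj v).obj X) = f := by
      rw [hf, ← Category.assoc, ← Functor.map_comp, S.T.right_unit]
      simp
    calc f = (A.act.obj v).map (S.T.F.map (S.T.unit.app X)) ≫
          (S.T.str v).app (S.T.F.obj X) ≫ S.T.F.map f ≫
            FA.τ ((A.act.obj v).obj X) := h1.symm
      _ = ((A.act.obj v).map (S.T.F.map (S.T.unit.app X)) ≫
            (S.T.str v).app (S.T.F.obj X)) ≫ S.T.F.map f ≫
              FA.τ ((A.act.obj v).obj X) := by simp only [Category.assoc]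
      _ = ((S.T.str v).app X ≫
            S.T.F.map ((A.act.obj v).map (S.T.unit.app X))) ≫ S.T.F.map f ≫
              FA.τ ((A.act.obj v).obj X) := by rw [nat]
      _ = (S.T.str v).app X ≫
          S.T.F.map ((A.act.obj v).map (S.T.unit.app X) ≫ f) ≫
            FA.τ ((A.act.obj v).obj X) := by
          simp only [Functor.map_comp, Category.assoc]
  -- The left-hand side satisfies the equation.
  have ha1 : (S.T.str v).app (S.T.F.obj X) ≫
      S.T.F.map ((S.T.str v).app X ≫ q ((A.act.obj v).obj X)) ≫
        FA.τ ((A.act.obj v).obj X) =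
      (A.act.obj v).map (S.T.mul.app X) ≫
        ((S.T.str v).app X ≫ q ((A.act.obj v).obj X)) := by
    rw [Functor.map_comp, Category.assoc, hq_hom]
    simp only [← Category.assoc]
    congr 1
    simpa only [Category.assoc] using S.T.mul_str v X
  -- The right-hand side satisfies the equation.
  have ha2 : (S.T.str v).app (S.T.F.obj X) ≫
      S.T.F.map ((A.act.obj v).map (q X) ≫ φS v X) ≫
        FA.τ ((A.act.obj v).obj X) =
      (A.act.obj v).map (S.T.mul.app X) ≫
        ((A.act.obj v).map (q X) ≫ φS v X) := by
    have nat := (S.T.str v).naturality (q X)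
    simp only [Functor.comp_map] at nat
    calc (S.T.str v).app (S.T.F.obj X) ≫
        S.T.F.map ((A.act.obj v).map (q X) ≫ φS v X) ≫
          FA.τ ((A.act.obj v).obj X)
        = ((S.T.str v).app (S.T.F.obj X) ≫
            S.T.F.map ((A.act.obj v).map (q X))) ≫ S.T.F.map (φS v X) ≫
              FA.τ ((A.act.obj v).obj X) := by
          simp only [Functor.map_comp, Category.assoc]
      _ = (A.act.obj v).map (S.T.F.map (q X)) ≫
            (S.T.str v).app (FA.TS X) ≫ S.T.F.map (φS v X) ≫
              FA.τ ((A.act.obj v).obj X) := by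
          rw [← nat]; simp only [Category.assoc]
      _ = (A.act.obj v).map (S.T.F.map (q X)) ≫
            (A.act.obj v).map (FA.τ X) ≫ φS v X := by rw [← hφS_hom]
      _ = (A.act.obj v).map (S.T.F.map (q X) ≫ FA.τ X) ≫ φS v X := by
          rw [Functor.map_comp, Category.assoc]
      _ = (A.act.obj v).map (S.T.mul.app X) ≫
            ((A.act.obj v).map (q X) ≫ φS v X) := by
          rw [hq_hom, Functor.map_comp]; simp only [Category.assoc]
  -- Both sides agree after precomposing with `v ⊳ η`.
  have hb : (A.act.obj v).map (S.T.unit.app X) ≫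
      ((S.T.str v).app X ≫ q ((A.act.obj v).obj X)) =
      (A.act.obj v).map (S.T.unit.app X) ≫
        ((A.act.obj v).map (q X) ≫ φS v X) := by
    calc (A.act.obj v).map (S.T.unit.app X) ≫
        ((S.T.str v).app X ≫ q ((A.act.obj v).obj X))
        = ((A.act.obj v).map (S.T.unit.app X) ≫ (S.T.str v).app X) ≫
            q ((A.act.obj v).obj X) := by rw [Category.assoc]
      _ = S.T.unit.app ((A.act.obj v).obj X) ≫ q ((A.act.obj v).obj X) := by
          rw [S.T.unit_str]
      _ = FA.unit ((A.act.obj v).obj X) := hq_unit _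
      _ = (A.act.obj v).map (FA.unit X) ≫ φS v X := (hφS_unit v X).symm
      _ = (A.act.obj v).map (S.T.unit.app X ≫ q X) ≫ φS v X := by
          rw [hq_unit]
      _ = (A.act.obj v).map (S.T.unit.app X) ≫
            ((A.act.obj v).map (q X) ≫ φS v X) := by
          rw [Functor.map_comp, Category.assoc]
  calc (S.T.str v).app X ≫ q ((A.act.obj v).obj X)
      = (S.T.str v).app X ≫
          S.T.F.map ((A.act.obj v).map (S.T.unit.app X) ≫
            ((S.T.str v).app X ≫ q ((A.act.obj v).obj X))) ≫
              FA.τ ((A.act.obj v).obj X) := key _ ha1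
    _ = (S.T.str v).app X ≫
          S.T.F.map ((A.act.obj v).map (S.T.unit.app X) ≫
            ((A.act.obj v).map (q X) ≫ φS v X)) ≫
              FA.τ ((A.act.obj v).obj X) := by rw [hb]
    _ = (A.act.obj v).map (q X) ≫ φS v X := (key _ ha2).symm

end MonEq
end

section
/- For a Monadic Equational System S admitting free algebras, the quotient map q^S_X : TX → T_S X factors as ι(τ^S_X) ∘ (n_X ⊳ TX) ∘ (λ_{TX})⁻¹, where ι(τ^S_X) : C̲(X, T_S X) ⊳ TX → T_S X is the interpretation map of the free S-algebra structure τ^S_X, and n_X : I → C̲(X, T_S X) is the transpose of η^S_X ∘ λ_X : I ⊳ X → T_S X. -/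
open CategoryTheory MonoidalCategory Limits

universe w v₁ v₂ v₃ u₁ u₂ u₃

namespace MonEq

/-- **The quotient map as an interpretation** (Proposition 7.? of the paper).
For a MES `S` admitting free algebras, the quotient map `q X : T X ⟶ T_S X`
factors as `ι(τ X) ∘ (n_X ⊳ T X) ∘ λ⁻¹`, where `ι(τ X)` is the interpretation
map of the free `S`-algebra structure and `n_X : I ⟶ C̲(X, T_S X)` is the
transpose of `η^S_X ∘ λ_X`. -/
theorem quotient_map_factors_through_interpretation
    {V : Type u₁} [Category.{v₁} V] [MonoidalCategory V]
    {C : Type u₂} [Category.{v₂} C]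
    {A : MonAction V C} (S : MES A) (FA : FreeAlgebras S)
    (q : ∀ X : C, S.T.F.obj X ⟶ FA.TS X)
    (hq_hom : ∀ X : C, S.T.F.map (q X) ≫ FA.τ X = S.T.mul.app X ≫ q X)
    (hq_unit : ∀ X : C, S.T.unit.app X ≫ q X = FA.unit X)
    (X : C)
    -- `n_X : I ⟶ C̲(X, T_S X)`, the transpose of `η^S_X ∘ λ_X`
    (n : 𝟙_ V ⟶ (S.R.rhom X).obj (FA.TS X))
    (hn : n = ((S.R.adj X).homEquiv (𝟙_ V) (FA.TS X))
      (A.lam.hom.app X ≫ FA.unit X)) :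
    q X = A.lam.inv.app (S.T.F.obj X) ≫ (A.act.map n).app (S.T.F.obj X) ≫
      interpMap S.R S.T.F S.T.str (FA.τ X) X := by
  -- the transpose identity: (n ⊳ X) ≫ ev = λ ≫ η^S
  have hev : (A.act.map n).app X ≫ S.R.ev X (FA.TS X) =
      A.lam.hom.app X ≫ FA.unit X := by
    have h1 : ((S.R.adj X).homEquiv (𝟙_ V) (FA.TS X)).symm n =
        A.lam.hom.app X ≫ FA.unit X := by
      rw [hn]; exact Equiv.symm_apply_apply _ _
    rw [Adjunction.homEquiv_counit] at h1
    exact h1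
  have key : A.lam.inv.app (S.T.F.obj X) ≫ (A.act.map n).app (S.T.F.obj X) ≫
      interpMap S.R S.T.F S.T.str (FA.τ X) X =
      S.T.F.map (FA.unit X) ≫ FA.τ X := by
    unfold interpMap
    rw [← Category.assoc ((A.act.map n).app _), S.T.str_natural n X]
    simp only [Category.assoc, ← Functor.map_comp_assoc]
    rw [hev, Functor.map_comp]
    simp only [← Category.assoc]
    rw [Category.assoc (A.lam.inv.app _), S.T.str_lam X]
    simp
  rw [key, ← hq_unit, Functor.map_comp, Category.assoc, hq_hom,
    ← Category.assoc, S.T.right_unit, Category.id_comp]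

end MonEq
end

section
/- Let T be a strong monad on a left-closed V-action C, and let (X,s) be an algebra for the underlying endofunctor T. Then (X,s) is an Eilenberg–Moore algebra for the monad T if and only if (⟦V,X⟧, s_V) is an Eilenberg–Moore algebra for T for every V ∈ V. -/
open CategoryTheory MonoidalCategory Limits

universe w v₁ v₂ v₃ u₁ u₂ u₃

namespace MonEq

section Aux

variable {V : Type u₁} [Category.{v₁} V] [MonoidalCategory V]
variable {C : Type u₂} [Category.{v₂} C] {A : MonAction V C}

lemma ev_transpose (L : LeftClosed A) (v : V) {Y X : C} (f : (A.act.obj v).obj Y ⟶ X) :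
    (A.act.obj v).map (((L.adj v).homEquiv Y X) f) ≫ L.ev v X = f := by
  have h := ((L.adj v).homEquiv Y X).symm_apply_apply f
  rw [Adjunction.homEquiv_counit] at h
  exact h

lemma lhom_hom_ext (L : LeftClosed A) (v : V) {Y X : C} {g₁ g₂ : Y ⟶ (L.lhom v).obj X}
    (h : (A.act.obj v).map g₁ ≫ L.ev v X = (A.act.obj v).map g₂ ≫ L.ev v X) :
    g₁ = g₂ := by
  apply ((L.adj v).homEquiv Y X).symm.injective
  simpa [Adjunction.homEquiv_counit, LeftClosed.ev] using h

lemma liftAlg_transpose (L : LeftClosed A) (M : StrongMonad A) {X : C}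
    (s : M.F.obj X ⟶ X) (v : V) :
    (A.act.obj v).map (liftAlg L M.F M.str s v) ≫ L.ev v X =
      (M.str v).app ((L.lhom v).obj X) ≫ M.F.map (L.ev v X) ≫ s :=
  ev_transpose L v _

end Aux

/-- **Eilenberg–Moore algebras are closed under left-homs** (Lemma 5.? of the
paper).  For a strong monad `M` on a left-closed `V`-action, an endofunctor
algebra `(X,s)` is an Eilenberg–Moore algebra for `M` if and only if the
lifted algebra `(⟦v,X⟧, s_v)` is an Eilenberg–Moore algebra for every `v ∈ V`. -/
theorem em_algebra_iff_lifted_em_algebras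
    {V : Type u₁} [Category.{v₁} V] [MonoidalCategory V]
    {C : Type u₂} [Category.{v₂} C]
    {A : MonAction V C} (L : LeftClosed A) (M : StrongMonad A)
    {X : C} (s : M.F.obj X ⟶ X) :
    IsEMAlgebra M s ↔ ∀ v : V, IsEMAlgebra M (liftAlg L M.F M.str s v) := by
  constructor
  · rintro ⟨hu, hm⟩ v
    constructor
    · -- unit law for the lifted algebra
      apply lhom_hom_ext L v
      simp only [CategoryTheory.Functor.map_comp, CategoryTheory.Functor.map_id,
        Category.assoc, Category.id_comp]
      rw [liftAlg_transpose]
      rw [← Category.assoc, M.unit_str v ((L.lhom v).obj X)]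
      have hn : M.unit.app ((A.act.obj v).obj ((L.lhom v).obj X)) ≫ M.F.map (L.ev v X) =
          L.ev v X ≫ M.unit.app X := (M.unit.naturality (L.ev v X)).symm
      rw [← Category.assoc, hn, Category.assoc, hu, Category.comp_id]
      simp
    · -- multiplication law for the lifted algebra
      apply lhom_hom_ext L v
      rw [CategoryTheory.Functor.map_comp, CategoryTheory.Functor.map_comp, Category.assoc,
        Category.assoc, liftAlg_transpose]
      -- LHS:  (act v).map (mul.app _) ≫ str ≫ F ev ≫ s
      have hmulstr := M.mul_str v ((L.lhom v).obj X)
      have hL :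
          (A.act.obj v).map (M.mul.app ((L.lhom v).obj X)) ≫
              (M.str v).app ((L.lhom v).obj X) ≫ M.F.map (L.ev v X) ≫ s =
            (M.str v).app (M.F.obj ((L.lhom v).obj X)) ≫
              M.F.map ((M.str v).app ((L.lhom v).obj X) ≫ M.F.map (L.ev v X) ≫ s) ≫ s := by
        have hmuln :
            M.mul.app ((A.act.obj v).obj ((L.lhom v).obj X)) ≫ M.F.map (L.ev v X) =
              M.F.map (M.F.map (L.ev v X)) ≫ M.mul.app X := by
          simpa using (M.mul.naturality (L.ev v X)).symm
        calc (A.act.obj v).map (M.mul.app ((L.lhom v).obj X)) ≫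
              (M.str v).app ((L.lhom v).obj X) ≫ M.F.map (L.ev v X) ≫ s
            = ((A.act.obj v).map (M.mul.app ((L.lhom v).obj X)) ≫
                (M.str v).app ((L.lhom v).obj X)) ≫ M.F.map (L.ev v X) ≫ s := by
              simp [Category.assoc]
          _ = ((M.str v).app (M.F.obj ((L.lhom v).obj X)) ≫
                M.F.map ((M.str v).app ((L.lhom v).obj X)) ≫
                M.mul.app ((A.act.obj v).obj ((L.lhom v).obj X))) ≫
                M.F.map (L.ev v X) ≫ s := by rw [← hmulstr]
          _ = (M.str v).app (M.F.obj ((L.lhom v).obj X)) ≫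
                M.F.map ((M.str v).app ((L.lhom v).obj X)) ≫
                (M.mul.app ((A.act.obj v).obj ((L.lhom v).obj X)) ≫
                  M.F.map (L.ev v X)) ≫ s := by simp [Category.assoc]
          _ = (M.str v).app (M.F.obj ((L.lhom v).obj X)) ≫
                M.F.map ((M.str v).app ((L.lhom v).obj X)) ≫
                M.F.map (M.F.map (L.ev v X)) ≫ M.mul.app X ≫ s := by
              rw [hmuln]; simp [Category.assoc]
          _ = (M.str v).app (M.F.obj ((L.lhom v).obj X)) ≫
                M.F.map ((M.str v).app ((L.lhom v).obj X) ≫ M.F.map (L.ev v X) ≫ s) ≫ s := by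
              rw [hm]; simp [Category.assoc]
      rw [hL]
      -- RHS
      have hstrn :
          (A.act.obj v).map (M.F.map (liftAlg L M.F M.str s v)) ≫
              (M.str v).app ((L.lhom v).obj X) =
            (M.str v).app (M.F.obj ((L.lhom v).obj X)) ≫
              M.F.map ((A.act.obj v).map (liftAlg L M.F M.str s v)) := by
        simpa using (M.str v).naturality (liftAlg L M.F M.str s v)
      calc (M.str v).app (M.F.obj ((L.lhom v).obj X)) ≫
            M.F.map ((M.str v).app ((L.lhom v).obj X) ≫ M.F.map (L.ev v X) ≫ s) ≫ s
          = (M.str v).app (M.F.obj ((L.lhom v).obj X)) ≫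
              M.F.map ((A.act.obj v).map (liftAlg L M.F M.str s v) ≫ L.ev v X) ≫ s := by
            rw [liftAlg_transpose]
        _ = ((M.str v).app (M.F.obj ((L.lhom v).obj X)) ≫
              M.F.map ((A.act.obj v).map (liftAlg L M.F M.str s v))) ≫
              M.F.map (L.ev v X) ≫ s := by simp [Category.assoc]
        _ = ((A.act.obj v).map (M.F.map (liftAlg L M.F M.str s v)) ≫
              (M.str v).app ((L.lhom v).obj X)) ≫ M.F.map (L.ev v X) ≫ s := by
            rw [hstrn]
        _ = (A.act.obj v).map (M.F.map (liftAlg L M.F M.str s v)) ≫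
              (M.str v).app ((L.lhom v).obj X) ≫ M.F.map (L.ev v X) ≫ s := by
            simp [Category.assoc]
  · intro h
    obtain ⟨hIu, hIm⟩ := h (𝟙_ V)
    set sI := liftAlg L M.F M.str s (𝟙_ V) with hsI
    -- the transpose of the left unitor and its retraction
    set j : X ⟶ (L.lhom (𝟙_ V)).obj X :=
      ((L.adj (𝟙_ V)).homEquiv X X) (A.lam.hom.app X) with hj
    have hj_ev : (A.act.obj (𝟙_ V)).map j ≫ L.ev (𝟙_ V) X = A.lam.hom.app X :=
      ev_transpose L (𝟙_ V) _
    set r : (L.lhom (𝟙_ V)).obj X ⟶ X :=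
      A.lam.inv.app ((L.lhom (𝟙_ V)).obj X) ≫ L.ev (𝟙_ V) X with hr
    have hjr : j ≫ r = 𝟙 X := by
      have hnat : j ≫ A.lam.inv.app ((L.lhom (𝟙_ V)).obj X) =
          A.lam.inv.app X ≫ (A.act.obj (𝟙_ V)).map j := by
        simpa using A.lam.inv.naturality j
      rw [hr, ← Category.assoc, hnat, Category.assoc, hj_ev]
      simp
    -- j is an algebra morphism
    have hmor : s ≫ j = M.F.map j ≫ sI := by
      apply lhom_hom_ext L (𝟙_ V)
      rw [CategoryTheory.Functor.map_comp, CategoryTheory.Functor.map_comp, Category.assoc,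
        Category.assoc, liftAlg_transpose, hj_ev]
      have hlamnat : (A.act.obj (𝟙_ V)).map s ≫ A.lam.hom.app X =
          A.lam.hom.app (M.F.obj X) ≫ s := by
        simpa using (A.lam.hom.naturality s :)
      rw [hlamnat]
      have hstrn :
          (A.act.obj (𝟙_ V)).map (M.F.map j) ≫ (M.str (𝟙_ V)).app ((L.lhom (𝟙_ V)).obj X) =
            (M.str (𝟙_ V)).app X ≫ M.F.map ((A.act.obj (𝟙_ V)).map j) := by
        simpa using ((M.str (𝟙_ V)).naturality j :)
      rw [← Category.assoc, hstrn, Category.assoc, ← Category.assoc (M.F.map _),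
        ← M.F.map_comp, hj_ev, ← Category.assoc, M.str_lam X]
    constructor
    · -- unit law
      have h1 : M.unit.app X ≫ s ≫ j = j := by
        rw [hmor, ← Category.assoc]
        have : M.unit.app X ≫ M.F.map j = j ≫ M.unit.app ((L.lhom (𝟙_ V)).obj X) := by
          simpa using (M.unit.naturality j).symm
        rw [this, Category.assoc, hIu, Category.comp_id]
      have := congrArg (fun g => g ≫ r) h1
      simpa [Category.assoc, hjr] using this
    · -- multiplication law
      have h1 : M.mul.app X ≫ s ≫ j = (M.F.map s ≫ s) ≫ j := by
        rw [hmor, ← Category.assoc]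
        have hmn : M.mul.app X ≫ M.F.map j =
            M.F.map (M.F.map j) ≫ M.mul.app ((L.lhom (𝟙_ V)).obj X) := by
          simpa using (M.mul.naturality j).symm
        rw [hmn, Category.assoc, hIm, ← Category.assoc, ← M.F.map_comp, ← hmor,
          M.F.map_comp, Category.assoc, Category.assoc, hmor]
      have h2 := congrArg (fun g => g ≫ r) h1
      simp only [Category.assoc] at h2
      rw [hjr] at h2
      simpa [Category.assoc] using h2

end MonEq
end

section
/- Let T be a strong endofunctor on a biclosed V-action C, let (X,s) be a T-algebra, and let u,v : C → TA be a T-equation. Then (X,s) satisfies u ≡ v if and only if (⟦V,X⟧, s_V) satisfies u ≡ v for every V ∈ V. -/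
open CategoryTheory MonoidalCategory Limits

universe w v₁ v₂ v₃ u₁ u₂ u₃

namespace MonEq

section Aux

variable {V : Type u₁} [Category.{v₁} V] [MonoidalCategory V]
variable {C : Type u₂} [Category.{v₂} C] {A : MonAction V C}

/-- Untransposed form of the lifted algebra. -/
lemma ev_liftAlg (L : LeftClosed A) (T : C ⥤ C)
    (σ : ∀ v : V, T ⋙ A.act.obj v ⟶ A.act.obj v ⋙ T)
    {X : C} (s : T.obj X ⟶ X) (w : V) :
    (A.act.obj w).map (liftAlg L T σ s w) ≫ L.ev w X =
      (σ w).app ((L.lhom w).obj X) ≫ T.map (L.ev w X) ≫ s := by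
  have h := ((L.adj w).homEquiv _ X).symm_apply_apply
      ((σ w).app ((L.lhom w).obj X) ≫ T.map (L.ev w X) ≫ s)
  rw [Adjunction.homEquiv_counit] at h
  simpa [liftAlg, LeftClosed.ev] using h

/-- Naturality of the right evaluation in the codomain. -/
lemma rev_natural (R : RightClosed A) {X Y : C} (h : X ⟶ Y) (a : C) :
    (A.act.map ((R.rhom a).map h)).app a ≫ R.ev a Y = R.ev a X ≫ h := by
  simpa [RightClosed.ev] using (R.adj a).counit.naturality h

/-- Transfer of the interpretation map along a `T`-algebra morphism. -/
lemma interpMap_comp_hom (R : RightClosed A) (T : StrongEndo A)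
    {X Y : C} (s : T.F.obj X ⟶ X) (t : T.F.obj Y ⟶ Y) (h : X ⟶ Y)
    (hAlg : s ≫ h = T.F.map h ≫ t) (a : C) :
    interpMap R T.F T.str s a ≫ h =
      (A.act.map ((R.rhom a).map h)).app (T.F.obj a) ≫ interpMap R T.F T.str t a := by
  unfold interpMap
  rw [reassoc_of% (T.str_natural ((R.rhom a).map h) a)]
  rw [← Functor.map_comp_assoc, rev_natural R h a, Functor.map_comp_assoc, ← hAlg]
  simp

/-- Transfer of interpretations along a `T`-algebra morphism. -/
lemma interp_comp_hom (R : RightClosed A) (T : StrongEndo A)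
    {X Y : C} (s : T.F.obj X ⟶ X) (t : T.F.obj Y ⟶ Y) (h : X ⟶ Y)
    (hAlg : s ≫ h = T.F.map h ≫ t) {c a : C} (u : c ⟶ T.F.obj a) :
    interp R T.F T.str s u ≫ h =
      (A.act.map ((R.rhom a).map h)).app c ≫ interp R T.F T.str t u := by
  unfold interp
  rw [Category.assoc, interpMap_comp_hom R T s t h hAlg a,
    ← Category.assoc, (A.act.map ((R.rhom a).map h)).naturality u, Category.assoc]

/-- The comparison map `w ⊗ C̲(a,⟦w,X⟧) ⟶ C̲(a,X)`. -/
def gmap (R : RightClosed A) (L : LeftClosed A) (X : C) (w : V) (a : C) :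
    w ⊗ (R.rhom a).obj ((L.lhom w).obj X) ⟶ (R.rhom a).obj X :=
  ((R.adj a).homEquiv _ X)
    ((A.assoc w ((R.rhom a).obj ((L.lhom w).obj X))).hom.app a ≫
      (A.act.obj w).map (R.ev a ((L.lhom w).obj X)) ≫ L.ev w X)

lemma ev_gmap (R : RightClosed A) (L : LeftClosed A) (X : C) (w : V) (a : C) :
    (A.act.map (gmap R L X w a)).app a ≫ R.ev a X =
      (A.assoc w ((R.rhom a).obj ((L.lhom w).obj X))).hom.app a ≫
        (A.act.obj w).map (R.ev a ((L.lhom w).obj X)) ≫ L.ev w X := by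
  have h := ((R.adj a).homEquiv _ X).symm_apply_apply
      ((A.assoc w ((R.rhom a).obj ((L.lhom w).obj X))).hom.app a ≫
        (A.act.obj w).map (R.ev a ((L.lhom w).obj X)) ≫ L.ev w X)
  rw [Adjunction.homEquiv_counit] at h
  simpa [gmap, RightClosed.ev] using h

/-- Untransposed form of the interpretation in a lifted algebra. -/
lemma ev_interp_lift (R : RightClosed A) (L : LeftClosed A) (T : StrongEndo A)
    {X : C} (s : T.F.obj X ⟶ X) (w : V) {c a : C} (u : c ⟶ T.F.obj a) :
    (A.act.obj w).map (interp R T.F T.str (liftAlg L T.F T.str s w) u) ≫ L.ev w X =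
      (A.assoc w ((R.rhom a).obj ((L.lhom w).obj X))).inv.app c ≫
        (A.act.map (gmap R L X w a)).app c ≫ interp R T.F T.str s u := by
  unfold interp interpMap
  simp only [Functor.map_comp, Category.assoc]
  rw [ev_liftAlg L T.F T.str s w]
  -- step 2: naturality of str w at ev_{a,Y}
  rw [reassoc_of% ((T.str w).naturality (R.ev a ((L.lhom w).obj X)))]
  -- step 3: str_assoc rearranged
  set Q := (R.rhom a).obj ((L.lhom w).obj X) with hQ
  have h3 : (A.act.obj w).map ((T.str Q).app a) ≫ (T.str w).app ((A.act.obj Q).obj a) =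
      (A.assoc w Q).inv.app (T.F.obj a) ≫ (T.str (w ⊗ Q)).app a ≫
        T.F.map ((A.assoc w Q).hom.app a) := by
    rw [T.str_assoc w Q a, ← Category.assoc, ← Category.assoc,
      Iso.inv_hom_id_app, Category.id_comp]
  rw [reassoc_of% h3]
  -- step 4+5: combine under T and use gmap / str_natural
  have h4 : (T.str (w ⊗ Q)).app a ≫ T.F.map ((A.assoc w Q).hom.app a) ≫
        T.F.map ((A.act.obj w).map (R.ev a ((L.lhom w).obj X))) ≫
          T.F.map (L.ev w X) ≫ s =
      (A.act.map (gmap R L X w a)).app (T.F.obj a) ≫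
        (T.str ((R.rhom a).obj X)).app a ≫ T.F.map (R.ev a X) ≫ s := by
    rw [← Functor.map_comp_assoc, ← Functor.map_comp_assoc]
    simp only [Category.assoc]
    rw [← ev_gmap R L X w a, Functor.map_comp_assoc,
      reassoc_of% (T.str_natural (gmap R L X w a) a)]
  rw [h4]
  -- step 6: naturality of assoc.inv at u
  have h6 : (A.act.obj w).map ((A.act.obj Q).map u) ≫ (A.assoc w Q).inv.app (T.F.obj a) =
      (A.assoc w Q).inv.app c ≫ (A.act.obj (w ⊗ Q)).map u :=
    (A.assoc w Q).inv.naturality u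
  rw [reassoc_of% h6]
  -- step 7: naturality of act.map gmap at u
  rw [reassoc_of% ((A.act.map (gmap R L X w a)).naturality u)]

/-- The unit `X ⟶ ⟦I,X⟧`, transpose of the left unitor. -/
def etaI (L : LeftClosed A) (X : C) : X ⟶ (L.lhom (𝟙_ V)).obj X :=
  ((L.adj (𝟙_ V)).homEquiv X X) (A.lam.hom.app X)

lemma ev_etaI (L : LeftClosed A) (X : C) :
    (A.act.obj (𝟙_ V)).map (etaI L X) ≫ L.ev (𝟙_ V) X = A.lam.hom.app X := by
  have h := ((L.adj (𝟙_ V)).homEquiv X X).symm_apply_apply (A.lam.hom.app X)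
  rw [Adjunction.homEquiv_counit] at h
  simpa [etaI, LeftClosed.ev] using h

lemma etaI_split (L : LeftClosed A) (X : C) :
    etaI L X ≫ A.lam.inv.app ((L.lhom (𝟙_ V)).obj X) ≫ L.ev (𝟙_ V) X = 𝟙 X := by
  have h : etaI L X ≫ A.lam.inv.app ((L.lhom (𝟙_ V)).obj X) =
      A.lam.inv.app X ≫ (A.act.obj (𝟙_ V)).map (etaI L X) := by
    simpa using A.lam.inv.naturality (etaI L X)
  rw [← Category.assoc, h, Category.assoc, ev_etaI]
  simpa using Iso.inv_hom_id_app A.lam X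

/-- `etaI` is a `T`-algebra morphism into the lifted algebra at the unit. -/
lemma etaI_alg (L : LeftClosed A) (T : StrongEndo A) {X : C} (s : T.F.obj X ⟶ X) :
    s ≫ etaI L X = T.F.map (etaI L X) ≫ liftAlg L T.F T.str s (𝟙_ V) := by
  apply ((L.adj (𝟙_ V)).homEquiv _ X).symm.injective
  rw [Adjunction.homEquiv_counit, Adjunction.homEquiv_counit]
  show (A.act.obj (𝟙_ V)).map _ ≫ L.ev (𝟙_ V) X =
    (A.act.obj (𝟙_ V)).map _ ≫ L.ev (𝟙_ V) X
  rw [Functor.map_comp, Functor.map_comp, Category.assoc, Category.assoc,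
    ev_etaI, ev_liftAlg L T.F T.str s (𝟙_ V),
    reassoc_of% ((T.str (𝟙_ V)).naturality (etaI L X)),
    ← Functor.map_comp_assoc, ev_etaI, ← Category.assoc, T.str_lam X]
  simpa using A.lam.hom.naturality s

end Aux

/-- **Satisfaction is closed under left-homs** (Corollary 5.? of the paper).
For a strong endofunctor `T` on a biclosed `V`-action, a `T`-algebra `(X,s)`
satisfies the equation `u ≡ v : c ⟶ T a` if and only if the lifted algebra
`(⟦w,X⟧, s_w)` satisfies it for every `w ∈ V`. -/
theorem satisfies_iff_lifted_satisfies
    {V : Type u₁} [Category.{v₁} V] [MonoidalCategory V]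
    {C : Type u₂} [Category.{v₂} C]
    {A : MonAction V C} (R : RightClosed A) (L : LeftClosed A)
    (T : StrongEndo A) {X : C} (s : T.F.obj X ⟶ X)
    {c a : C} (u v : c ⟶ T.F.obj a) :
    Satisfies R T.F T.str s u v ↔
      ∀ w : V, Satisfies R T.F T.str (liftAlg L T.F T.str s w) u v := by
  constructor
  · intro h w
    unfold Satisfies at h ⊢
    apply ((L.adj w).homEquiv _ X).symm.injective
    rw [Adjunction.homEquiv_counit, Adjunction.homEquiv_counit]
    show (A.act.obj w).map _ ≫ (L.adj w).counit.app X =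
      (A.act.obj w).map _ ≫ (L.adj w).counit.app X
    have hu := ev_interp_lift R L T s w u
    have hv := ev_interp_lift R L T s w v
    rw [LeftClosed.ev] at hu hv
    rw [hu, hv, h]
  · intro h
    have hw := h (𝟙_ V)
    unfold Satisfies at hw ⊢
    have hu := interp_comp_hom R T s (liftAlg L T.F T.str s (𝟙_ V)) (etaI L X)
      (etaI_alg L T s) u
    have hv := interp_comp_hom R T s (liftAlg L T.F T.str s (𝟙_ V)) (etaI L X)
      (etaI_alg L T s) v
    have heq : interp R T.F T.str s u ≫ etaI L X =
        interp R T.F T.str s v ≫ etaI L X := by rw [hu, hv, hw]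
    have := congrArg (fun f => f ≫ A.lam.inv.app ((L.lhom (𝟙_ V)).obj X) ≫
      L.ev (𝟙_ V) X) heq
    simpa [reassoc_of% (etaI_split L X), etaI_split L X] using this


end MonEq
end

section
/- Let T be a strong endofunctor on a right-closed V-action C, and let h : (X,s) → (Y,t) be a T-algebra homomorphism whose underlying morphism h : X → Y is a monomorphism in C. Then for every T-equation u,v : C → TA, if (Y,t) satisfies u ≡ v then (X,s) satisfies u ≡ v. -/
open CategoryTheory MonoidalCategory Limits

universe w v₁ v₂ v₃ u₁ u₂ u₃

namespace MonEq

/-- **Satisfaction transfers along monomorphic algebra homomorphisms**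
(Corollary 5.? of the paper).  For a strong endofunctor `T` on a right-closed
`V`-action and a `T`-algebra homomorphism `h : (X,s) ⟶ (Y,t)` whose underlying
morphism is a monomorphism, if `(Y,t)` satisfies `u ≡ v` then so does `(X,s)`. -/
theorem satisfaction_along_mono
    {V : Type u₁} [Category.{v₁} V] [MonoidalCategory V]
    {C : Type u₂} [Category.{v₂} C]
    {A : MonAction V C} (R : RightClosed A) (T : StrongEndo A)
    {X Y : C} (s : T.F.obj X ⟶ X) (t : T.F.obj Y ⟶ Y)
    (h : X ⟶ Y) (hh : T.F.map h ≫ t = s ≫ h) [Mono h]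
    {c a : C} (u v : c ⟶ T.F.obj a) :
    Satisfies R T.F T.str t u v → Satisfies R T.F T.str s u v := by
  intro hEq
  have hev : R.ev a X ≫ h = (A.act.map ((R.rhom a).map h)).app a ≫ R.ev a Y := by
    have := ((R.adj a).counit.naturality h).symm
    simpa [RightClosed.ev] using this
  have key : ∀ w : c ⟶ T.F.obj a,
      interp R T.F T.str s w ≫ h =
        (A.act.map ((R.rhom a).map h)).app c ≫ interp R T.F T.str t w := by
    intro w
    have hnat := (A.act.map ((R.rhom a).map h)).naturality w
    have hstr := T.str_natural ((R.rhom a).map h) a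
    calc interp R T.F T.str s w ≫ h
        = (A.act.obj ((R.rhom a).obj X)).map w ≫ (T.str ((R.rhom a).obj X)).app a ≫
            T.F.map (R.ev a X) ≫ T.F.map h ≫ t := by
          simp only [interp, interpMap, Category.assoc, hh]
      _ = (A.act.obj ((R.rhom a).obj X)).map w ≫ (T.str ((R.rhom a).obj X)).app a ≫
            T.F.map ((A.act.map ((R.rhom a).map h)).app a) ≫
            T.F.map (R.ev a Y) ≫ t := by
          rw [← Functor.map_comp_assoc, hev, Functor.map_comp_assoc]
      _ = (A.act.obj ((R.rhom a).obj X)).map w ≫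
            (A.act.map ((R.rhom a).map h)).app (T.F.obj a) ≫
            (T.str ((R.rhom a).obj Y)).app a ≫ T.F.map (R.ev a Y) ≫ t := by
          rw [← Category.assoc ((T.str ((R.rhom a).obj X)).app a), ← hstr,
            Category.assoc]
      _ = (A.act.map ((R.rhom a).map h)).app c ≫
            (A.act.obj ((R.rhom a).obj Y)).map w ≫
            (T.str ((R.rhom a).obj Y)).app a ≫ T.F.map (R.ev a Y) ≫ t := by
          rw [← Category.assoc, hnat, Category.assoc]
      _ = (A.act.map ((R.rhom a).map h)).app c ≫ interp R T.F T.str t w := by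
          simp only [interp, interpMap, Category.assoc]
  apply (cancel_mono h).mp
  rw [show interp R T.F T.str s u = _ from rfl]
  rw [key u, key v, hEq]

end MonEq
end
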